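/- For d = |E|+1,…,2|E|, the coefficient of λ^d in det(λ − T_G) equals ∑_{r=1}^{⌊d/2⌋} (−1)^{r+1} ∑_{i₁<…<i_r} [λ^{d−2r}] det(λ − T_{G−e_{i₁}−…−e_{i_r}}). -/

import Mathlib

/-- The reversal of an oriented edge. -/
def obar {m : ℕ} (x : Fin m × Bool) : Fin m × Bool := (x.1, !x.2)

/-- Origin of an oriented edge of the multigraph with edge endpoint maps `src`, `tgt`. -/
def orig {m : ℕ} {V : Type} (src tgt : Fin m → V) (x : Fin m × Bool) : V :=
  if x.2 then src x.1 else tgt x.1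

/-- Terminus of an oriented edge. -/
def termv {m : ℕ} {V : Type} (src tgt : Fin m → V) (x : Fin m × Bool) : V :=
  if x.2 then tgt x.1 else src x.1

/-- The Bass–Hashimoto edge adjacency matrix of the multigraph. -/
def bh {m : ℕ} {V : Type} [DecidableEq V] (R : Type) [Ring R] (src tgt : Fin m → V) :
    Matrix (Fin m × Bool) (Fin m × Bool) R :=
  Matrix.of fun x y => if termv src tgt x = orig src tgt y ∧ y ≠ obar x then 1 else 0

/-- Connectedness of the multigraph. -/
def Gconn {m : ℕ} {V : Type} (src tgt : Fin m → V) : Prop :=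
  ∀ a b : V, Relation.ReflTransGen
    (fun u v => ∃ e, (src e = u ∧ tgt e = v) ∨ (src e = v ∧ tgt e = u)) a b

/-- The characteristic polynomial `det(λ − T_G)` of the edge adjacency matrix. -/
noncomputable def charT {m : ℕ} {V : Type} [DecidableEq V] (src tgt : Fin m → V) :
    Polynomial ℝ :=
  Matrix.det (Matrix.of fun x y : Fin m × Bool =>
    (if x = y then Polynomial.X else 0) - Polynomial.C (bh ℝ src tgt x y))

/-- The characteristic polynomial `det(λ − T_{G − e_{i₁} − … − e_{i_r}})` of the edge
adjacency matrix of the graph obtained by deleting the edges in `s`. -/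
noncomputable def charTdel {m : ℕ} {V : Type} [DecidableEq V] (src tgt : Fin m → V)
    (s : Finset (Fin m)) : Polynomial ℝ :=
  Matrix.det (Matrix.of fun a b : {x : Fin m × Bool // x.1 ∉ s} =>
    (if a = b then Polynomial.X else 0) - Polynomial.C (bh ℝ src tgt a.1 b.1))

section Aux
open Polynomial Matrix Finset

noncomputable def subdet {n : Type} [DecidableEq n] (A : Matrix n n ℝ) (T : Finset n) : ℝ :=
  Matrix.det (Matrix.of fun a b : {x // x ∈ T} => A a.1 b.1)

lemma detP_expand {n : Type} [Fintype n] [DecidableEq n] (A : Matrix n n ℝ) :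
    Matrix.det (Matrix.of fun x y : n =>
      (if x = y then Polynomial.X else 0) - Polynomial.C (A x y)) =
    ∑ s : Finset n, Polynomial.C ((-1 : ℝ) ^ (sᶜ.card) * subdet A sᶜ) * Polynomial.X ^ s.card := by
  classical
  set f := (Matrix.detRowAlternating : (n → ℝ[X]) [⋀^n]→ₗ[ℝ[X]] ℝ[X]) with hf
  set a : n → n → ℝ[X] := fun i j => if i = j then Polynomial.X else 0 with ha
  set b : n → n → ℝ[X] := fun i j => -Polynomial.C (A i j) with hb
  have key : Matrix.det (Matrix.of fun x y : n =>
      (if x = y then Polynomial.X else 0) - Polynomial.C (A x y))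
      = f.toMultilinearMap (a + b) := by
    show Matrix.det _ = Matrix.detRowAlternating _
    rw [Matrix.det]
    congr 1
  rw [key, f.toMultilinearMap.map_add_univ a b]
  refine Finset.sum_congr rfl fun s _ => ?_
  have hrow : (s.piecewise a b)
      = fun i => (if i ∈ s then (Polynomial.X : ℝ[X]) else 1) •
          (s.piecewise (fun i => Pi.single i (1 : ℝ[X])) b i) := by
    funext i j
    by_cases h : i ∈ s <;>
      simp [Finset.piecewise, h, a, b, Pi.single_apply, eq_comm, mul_ite]
  rw [hrow]
  rw [f.toMultilinearMap.map_smul_univ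
    (fun i => if i ∈ s then (Polynomial.X : ℝ[X]) else 1)
    (s.piecewise (fun i => Pi.single i (1 : ℝ[X])) b)]
  rw [Finset.prod_ite_mem, Finset.univ_inter, Finset.prod_const]
  set B : Matrix n n ℝ[X] := Matrix.of fun i j =>
    if i ∈ s then (if i = j then (1:ℝ[X]) else 0) else -Polynomial.C (A i j) with hBdef
  have hB : f.toMultilinearMap (s.piecewise (fun i => Pi.single i 1) b) = Matrix.det B := by
    have hrows : s.piecewise (fun i => Pi.single i (1:ℝ[X])) b = B := by
      funext i j
      by_cases h : i ∈ s <;> simp [Finset.piecewise, h, b, B, Pi.single_apply, eq_comm]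
    rw [hrows]
    rfl
  rw [hB]
  let e : (↥s ⊕ ↥(sᶜ)) ≃ n :=
    (Equiv.sumCongr (Equiv.refl ↥s)
      (Equiv.subtypeEquivRight (fun x => Finset.mem_compl))).trans (Equiv.sumCompl (· ∈ s))
  have hsub : Matrix.det B = Matrix.det (B.submatrix e e) :=
    (Matrix.det_submatrix_equiv_self e B).symm
  have hblocks : B.submatrix e e = Matrix.fromBlocks 1 0
      (Matrix.of fun (i : ↥(sᶜ)) (j : ↥s) => -Polynomial.C (A i.1 j.1))
      (Matrix.of fun i j : ↥(sᶜ) => -Polynomial.C (A i.1 j.1)) := by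
    have he1 : ∀ i : ↥s, e (Sum.inl i) = i.1 := fun i => by simp [e]
    have he2 : ∀ i : ↥(sᶜ), e (Sum.inr i) = i.1 := fun i => by simp [e]
    ext (i|i) (j|j) <;>
      simp only [Matrix.submatrix_apply, he1, he2, hBdef, Matrix.of_apply,
        Matrix.fromBlocks_apply₁₁, Matrix.fromBlocks_apply₁₂,
        Matrix.fromBlocks_apply₂₁, Matrix.fromBlocks_apply₂₂]
    · rw [if_pos i.2, Matrix.one_apply]
      by_cases h : i = j
      · subst h; simp
      · rw [if_neg (fun hh => h (Subtype.ext hh)), if_neg h]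
    · rw [if_pos i.2, if_neg, Matrix.zero_apply]
      intro h
      exact (Finset.mem_compl.mp j.2) (h ▸ i.2)
    · rw [if_neg (Finset.mem_compl.mp i.2)]
    · rw [if_neg (Finset.mem_compl.mp i.2)]
  rw [hsub, hblocks, Matrix.det_fromBlocks_zero₁₂, Matrix.det_one, one_mul]
  have hneg : (Matrix.of fun i j : ↥(sᶜ) => -Polynomial.C (A i.1 j.1))
      = -((Matrix.of fun i j : ↥(sᶜ) => A i.1 j.1).map Polynomial.C) := by
    ext i j; simp
  rw [hneg, Matrix.det_neg, ← RingHom.mapMatrix_apply, ← RingHom.map_det, Fintype.card_coe]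
  rw [subdet, smul_eq_mul, _root_.map_mul, _root_.map_pow, map_neg, Polynomial.C_1]
  ring

lemma coeff_detP {n : Type} [Fintype n] [DecidableEq n] (A : Matrix n n ℝ) (d : ℕ)
    (hd : d ≤ Fintype.card n) :
    (Matrix.det (Matrix.of fun x y : n =>
      (if x = y then Polynomial.X else 0) - Polynomial.C (A x y))).coeff d =
    (-1 : ℝ) ^ (Fintype.card n - d) *
      ∑ T ∈ (Finset.univ : Finset n).powersetCard (Fintype.card n - d), subdet A T := by
  classical
  rw [detP_expand, Polynomial.finset_sum_coeff]
  have hterm : ∀ s : Finset n,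
      (Polynomial.C ((-1:ℝ)^(sᶜ.card) * subdet A sᶜ) * Polynomial.X ^ s.card).coeff d
      = if s.card = d then (-1:ℝ)^(sᶜ.card) * subdet A sᶜ else 0 := by
    intro s
    rw [Polynomial.coeff_C_mul, Polynomial.coeff_X_pow]
    by_cases h : s.card = d
    · simp [h]
    · rw [if_neg (fun hh => h hh.symm), if_neg h, mul_zero]
  simp_rw [hterm]
  rw [← Finset.sum_filter]
  rw [Finset.mul_sum]
  refine Finset.sum_nbij' (fun s => sᶜ) (fun T => Tᶜ) ?_ ?_ ?_ ?_ ?_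
  · intro s hs
    simp only [Finset.mem_filter] at hs
    simp [Finset.mem_powersetCard_univ, Finset.card_compl, hs.2]
  · intro T hT
    simp only [Finset.mem_powersetCard_univ] at hT
    simp only [Finset.mem_filter, Finset.mem_univ, true_and, Finset.card_compl, hT]
    omega
  · intro s _; simp
  · intro T _; simp
  · intro s hs
    simp only [Finset.mem_filter] at hs
    rw [Finset.card_compl, hs.2]

lemma subdet_map {α β : Type} [DecidableEq α] [DecidableEq β] (B : Matrix β β ℝ)
    (f : α ↪ β) (t : Finset α) :
    subdet B (t.map f) = subdet (Matrix.of fun a b : α => B (f a) (f b)) t := by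
  classical
  have hbij : Function.Bijective (fun a : {x // x ∈ t} =>
      (⟨f a.1, Finset.mem_map_of_mem f a.2⟩ : {y // y ∈ t.map f})) := by
    constructor
    · intro a b hab
      exact Subtype.ext (f.injective (congrArg Subtype.val hab))
    · rintro ⟨y, hy⟩
      obtain ⟨x, hx, rfl⟩ := Finset.mem_map.mp hy
      exact ⟨⟨x, hx⟩, rfl⟩
  let e := Equiv.ofBijective _ hbij
  have := Matrix.det_submatrix_equiv_self e
    (Matrix.of fun a b : {y // y ∈ t.map f} => B a.1 b.1)
  rw [subdet, subdet, ← this]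
  rfl

lemma sum_subdet_subtype {β : Type} [Fintype β] [DecidableEq β] (B : Matrix β β ℝ)
    (p : β → Prop) [DecidablePred p] (k : ℕ) :
    ∑ T ∈ (Finset.univ : Finset {x // p x}).powersetCard k,
      subdet (Matrix.of fun a b : {x // p x} => B a.1 b.1) T
      = ∑ T ∈ (Finset.univ.filter p).powersetCard k, subdet B T := by
  classical
  refine Finset.sum_nbij' (fun T => T.map (Function.Embedding.subtype p))
    (fun T => T.subtype p) ?_ ?_ ?_ ?_ ?_
  · intro T hT
    rw [Finset.mem_powersetCard_univ] at hT
    rw [Finset.mem_powersetCard]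
    constructor
    · intro x hx
      obtain ⟨a, _, rfl⟩ := Finset.mem_map.mp hx
      simp [a.2]
    · simpa using hT
  · intro T hT
    rw [Finset.mem_powersetCard] at hT
    rw [Finset.mem_powersetCard_univ, Finset.card_subtype]
    rw [Finset.filter_true_of_mem, hT.2]
    intro x hx
    simpa using (hT.1 hx)
  · intro T _
    ext a
    simp only [Finset.mem_subtype, Finset.mem_map, Function.Embedding.coe_subtype,
      Subtype.ext_iff]
    constructor
    · rintro ⟨b, hb, hba⟩
      rwa [show b = a from Subtype.ext hba] at hb
    · intro ha
      exact ⟨a, ha, rfl⟩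
  · intro T hT
    rw [Finset.mem_powersetCard] at hT
    show (T.subtype p).map (Function.Embedding.subtype p) = T
    rw [Finset.subtype_map, Finset.filter_true_of_mem]
    intro x hx
    simpa using (hT.1 hx)
  · intro T _
    rw [subdet_map]
    rfl

lemma alt_sum_choose (t D : ℕ) (h1 : 1 ≤ t) (h2 : t ≤ D) :
    ∑ r ∈ Finset.Icc 1 D, (-1:ℝ)^(r+1) * (t.choose r : ℝ) = 1 := by
  have hZ := Int.alternating_sum_range_choose_of_ne (Nat.one_le_iff_ne_zero.mp h1)
  have hR : ∑ i ∈ Finset.range (t+1), (-1:ℝ)^i * (t.choose i : ℝ) = 0 := by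
    have := congrArg (fun z : ℤ => (z : ℝ)) hZ
    push_cast at this
    simpa using this
  rw [Finset.sum_range_succ'] at hR
  rw [← Finset.Ico_add_one_right_eq_Icc, ← Finset.sum_Ico_consecutive _
    (show 1 ≤ t+1 by omega) (show t+1 ≤ D+1 by omega)]
  have hzero : ∑ r ∈ Finset.Ico (t+1) (D+1), (-1:ℝ)^(r+1) * (t.choose r : ℝ) = 0 := by
    refine Finset.sum_eq_zero fun r hr => ?_
    rw [Finset.mem_Ico] at hr
    rw [Nat.choose_eq_zero_of_lt (by omega)]
    simp
  rw [hzero, add_zero, Finset.sum_Ico_eq_sum_range]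
  simp only [Nat.add_sub_cancel]
  have hterm : ∀ i, (-1:ℝ)^(1+i+1) * (t.choose (1+i) : ℝ)
      = -((-1:ℝ)^(i+1) * (t.choose (i+1) : ℝ)) := by
    intro i
    rw [show 1+i = i+1 from by omega, pow_succ]
    ring
  simp_rw [hterm]
  rw [Finset.sum_neg_distrib]
  simp only [pow_zero, Nat.choose_zero_right, Nat.cast_one, one_mul] at hR
  linarith

lemma card_del (m : ℕ) (s : Finset (Fin m)) :
    Fintype.card {x : Fin m × Bool // x.1 ∉ s} = 2 * m - 2 * s.card := by
  let e : {x : Fin m × Bool // x.1 ∉ s} ≃ {i : Fin m // i ∉ s} × Bool :=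
    { toFun := fun x => (⟨x.1.1, x.2⟩, x.1.2)
      invFun := fun y => ⟨(y.1.1, y.2), y.1.2⟩
      left_inv := by rintro ⟨⟨a, b⟩, h⟩; rfl
      right_inv := by rintro ⟨⟨a, h⟩, b⟩; rfl }
  rw [Fintype.card_congr e, Fintype.card_prod, Fintype.card_bool]
  have h1 : Fintype.card {i : Fin m // i ∉ s} = m - s.card := by
    rw [Fintype.card_subtype_compl]
    simp [Fintype.card_coe]
  have h2 : s.card ≤ m := by
    simpa using Finset.card_le_univ s
  rw [h1]
  omega

lemma powersetCard_filter_univ {β : Type} [Fintype β] [DecidableEq β]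
    (p : β → Prop) [DecidablePred p] (k : ℕ) :
    (Finset.univ.filter p).powersetCard k
      = ((Finset.univ : Finset β).powersetCard k).filter (fun T => ∀ x ∈ T, p x) := by
  ext T
  simp only [Finset.mem_powersetCard, Finset.mem_filter, Finset.subset_iff, Finset.mem_univ,
    true_and]
  tauto

lemma card_le_two_mul_image_fst {m : ℕ} (T : Finset (Fin m × Bool)) :
    T.card ≤ 2 * (T.image Prod.fst).card := by
  have hsub : T ⊆ (T.image Prod.fst) ×ˢ (Finset.univ : Finset Bool) := by
    intro x hx
    rw [Finset.mem_product]
    exact ⟨Finset.mem_image_of_mem _ hx, Finset.mem_univ _⟩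
  calc T.card ≤ ((T.image Prod.fst) ×ˢ (Finset.univ : Finset Bool)).card :=
        Finset.card_le_card hsub
    _ = (T.image Prod.fst).card * 2 := by rw [Finset.card_product]; simp
    _ = 2 * (T.image Prod.fst).card := by ring

end Aux

open Polynomial Matrix Finset in
/-- for `d = |E|+1, …, 2|E|`,
`[λ^d] det(λ − T_G) = ∑_{r=1}^{⌊d/2⌋} (−1)^{r+1} ∑_{i₁<…<i_r}
  [λ^{d−2r}] det(λ − T_{G−e_{i₁}−…−e_{i_r}})`. -/
theorem stmt3 (m : ℕ) (V : Type) [Fintype V] [DecidableEq V]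
    (src tgt : Fin m → V) (hconn : Gconn src tgt)
    (d : ℕ) (hd1 : m < d) (hd2 : d ≤ 2 * m) :
    (charT src tgt).coeff d =
      ∑ r ∈ Finset.Icc 1 (d / 2), (-1 : ℝ) ^ (r + 1) *
        ∑ s ∈ (Finset.univ : Finset (Fin m)).powersetCard r,
          (charTdel src tgt s).coeff (d - 2 * r) := by
  classical
  set A := bh ℝ src tgt with hA
  set k := 2 * m - d with hk
  have hcard : Fintype.card (Fin m × Bool) = 2 * m := by
    simp [Fintype.card_prod, mul_comm]
  -- LHS
  have hL : (charT src tgt).coeff d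
      = (-1:ℝ)^k * ∑ T ∈ (Finset.univ : Finset (Fin m × Bool)).powersetCard k, subdet A T := by
    have h := coeff_detP A d (by rw [hcard]; omega)
    rw [hcard] at h
    exact h
  -- RHS inner coefficients
  have hR : ∀ r ∈ Finset.Icc 1 (d / 2), ∀ s ∈ (Finset.univ : Finset (Fin m)).powersetCard r,
      (charTdel src tgt s).coeff (d - 2 * r)
      = (-1:ℝ)^k * ∑ T ∈ ((Finset.univ : Finset (Fin m × Bool)).filter
          (fun x => x.1 ∉ s)).powersetCard k, subdet A T := by
    intro r hr s hs
    rw [Finset.mem_Icc] at hr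
    rw [Finset.mem_powersetCard_univ] at hs
    have hrd : 2 * r ≤ d := by omega
    have hcd : Fintype.card {x : Fin m × Bool // x.1 ∉ s} = 2 * m - 2 * r := by
      rw [card_del, hs]
    have h := coeff_detP (Matrix.of fun a b : {x : Fin m × Bool // x.1 ∉ s} => A a.1 b.1)
      (d - 2 * r) (by rw [hcd]; omega)
    rw [hcd] at h
    have hk2 : 2 * m - 2 * r - (d - 2 * r) = k := by omega
    rw [hk2] at h
    have hchar : (charTdel src tgt s).coeff (d - 2 * r)
        = (Matrix.det (Matrix.of fun x y : {x : Fin m × Bool // x.1 ∉ s} =>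
          (if x = y then Polynomial.X else 0) -
            Polynomial.C ((Matrix.of fun a b : {x : Fin m × Bool // x.1 ∉ s} => A a.1 b.1) x y))).coeff
          (d - 2 * r) := rfl
    rw [hchar, h, sum_subdet_subtype A (fun x : Fin m × Bool => x.1 ∉ s) k]
  rw [Finset.sum_congr rfl (fun r hr => by
    rw [Finset.sum_congr rfl (fun s hs => hR r hr s hs)])]
  -- factor out the sign
  rw [hL]
  have hfac : ∑ r ∈ Finset.Icc 1 (d / 2), (-1:ℝ)^(r+1) *
      ∑ s ∈ (Finset.univ : Finset (Fin m)).powersetCard r,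
        ((-1:ℝ)^k * ∑ T ∈ ((Finset.univ : Finset (Fin m × Bool)).filter
          (fun x => x.1 ∉ s)).powersetCard k, subdet A T)
      = (-1:ℝ)^k * ∑ r ∈ Finset.Icc 1 (d / 2), (-1:ℝ)^(r+1) *
        ∑ s ∈ (Finset.univ : Finset (Fin m)).powersetCard r,
          ∑ T ∈ ((Finset.univ : Finset (Fin m × Bool)).filter
            (fun x => x.1 ∉ s)).powersetCard k, subdet A T := by
    rw [Finset.mul_sum]
    refine Finset.sum_congr rfl fun r _ => ?_
    rw [← Finset.mul_sum]
    ring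
  rw [hfac]
  congr 1
  -- now the purely combinatorial identity
  have hswap : ∀ r, ∑ s ∈ (Finset.univ : Finset (Fin m)).powersetCard r,
      ∑ T ∈ ((Finset.univ : Finset (Fin m × Bool)).filter
        (fun x => x.1 ∉ s)).powersetCard k, subdet A T
      = ∑ T ∈ (Finset.univ : Finset (Fin m × Bool)).powersetCard k,
          (((Finset.univ : Finset (Fin m)).powersetCard r).filter
            (fun s => ∀ x ∈ T, x.1 ∉ s)).card • subdet A T := by
    intro r
    have h1 : ∀ s : Finset (Fin m), ∑ T ∈ ((Finset.univ : Finset (Fin m × Bool)).filter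
        (fun x => x.1 ∉ s)).powersetCard k, subdet A T
        = ∑ T ∈ (Finset.univ : Finset (Fin m × Bool)).powersetCard k,
            if ∀ x ∈ T, x.1 ∉ s then subdet A T else 0 := by
      intro s
      rw [powersetCard_filter_univ, Finset.sum_filter]
    simp_rw [h1]
    rw [Finset.sum_comm]
    refine Finset.sum_congr rfl fun T _ => ?_
    rw [← Finset.sum_filter, Finset.sum_const]
  simp_rw [hswap]
  -- count: the number of admissible s is choose t r
  have hcount : ∀ (T : Finset (Fin m × Bool)) (r : ℕ),
      (((Finset.univ : Finset (Fin m)).powersetCard r).filter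
        (fun s => ∀ x ∈ T, x.1 ∉ s)).card = (m - (T.image Prod.fst).card).choose r := by
    intro T r
    have : ((Finset.univ : Finset (Fin m)).powersetCard r).filter
        (fun s => ∀ x ∈ T, x.1 ∉ s) = ((T.image Prod.fst)ᶜ).powersetCard r := by
      ext s
      simp only [Finset.mem_filter, Finset.mem_powersetCard_univ, Finset.mem_powersetCard]
      constructor
      · rintro ⟨hc, hall⟩
        refine ⟨fun i hi => Finset.mem_compl.mpr ?_, hc.2⟩
        intro hmem
        obtain ⟨x, hx, hxi⟩ := Finset.mem_image.mp hmem
        exact hall x hx (hxi ▸ hi)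
      · rintro ⟨hsub, hc⟩
        refine ⟨⟨Finset.subset_univ s, hc⟩, fun x hx hxs => ?_⟩
        exact Finset.mem_compl.mp (hsub hxs) (Finset.mem_image_of_mem _ hx)
    rw [this, Finset.card_powersetCard, Finset.card_compl, Fintype.card_fin]
  -- swap the r-sum and the T-sum
  simp_rw [hcount, nsmul_eq_mul, Finset.mul_sum]
  rw [Finset.sum_comm]
  refine (Finset.sum_congr rfl fun T hT => ?_)
  rw [Finset.mem_powersetCard_univ] at hT
  have himg1 : (T.image Prod.fst).card ≤ T.card := Finset.card_image_le
  have himg2 := card_le_two_mul_image_fst T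
  set t := m - (T.image Prod.fst).card with ht
  have h1 : 1 ≤ t := by omega
  have h2 : t ≤ d / 2 := by omega
  have hterm : ∀ r, (-1:ℝ)^(r+1) * ((t.choose r : ℝ) * subdet A T)
      = ((-1:ℝ)^(r+1) * (t.choose r : ℝ)) * subdet A T := fun r => by ring
  simp_rw [hterm]
  rw [← Finset.sum_mul, alt_sum_choose t (d/2) h1 h2, one_mul]
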